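/- Suppose for every substitution σ over variables V satisfying constraint C, pair (A[σ], B[σ]) lies in type simulation R₁, and for every such σ, (B[σ], D[σ]) lies in type simulation R₂. Then there is a type simulation R (namely the composition R₂ ∘ R₁ closed appropriately) such that for every σ satisfying C, (A[σ], D[σ]) ∈ R; i.e. the guarded subtyping judgment '∀V. C → · <: ·' is transitive. -/
import Mathlib


/-- Ground session types. -/
inductive STy : Type 1 where
  | unit : STy
  | ichoice (L : Finset String) (f : String → STy) : STy
  | echoice (L : Finset String) (f : String → STy) : STy
  | tensor (a b : STy) : STy
  | lolli (a b : STy) : STy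
  | assert (p : Prop) (a : STy) : STy
  | assume (p : Prop) (a : STy) : STy
  | exi (f : ℕ → STy) : STy
  | all (f : ℕ → STy) : STy

/-- The simulation operator Φ. -/
def Phi (R : STy → STy → Prop) : STy → STy → Prop := fun a b =>
  match a, b with
  | .unit, .unit => True
  | .ichoice L f, .ichoice M g => L ⊆ M ∧ ∀ ℓ ∈ L, R (f ℓ) (g ℓ)
  | .echoice L f, .echoice M g => M ⊆ L ∧ ∀ m ∈ M, R (f m) (g m)
  | .tensor a1 a2, .tensor b1 b2 => R a1 b1 ∧ R a2 b2
  | .lolli a1 a2, .lolli b1 b2 => R b1 a1 ∧ R a2 b2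
  | .assert p a', .assert q b' => (p → q) ∧ R a' b'
  | .assume p a', .assume q b' => (q → p) ∧ R a' b'
  | .exi f, .exi g => ∀ n, R (f n) (g n)
  | .all f, .all g => ∀ n, R (f n) (g n)
  | _, _ => False

/-- A type simulation is a post-fixed point of Φ. -/
def IsSim (R : STy → STy → Prop) : Prop := ∀ a b, R a b → Phi R a b

/-- Coinductive subtyping: union of all type simulations. -/
def SubT (a b : STy) : Prop := ∃ R, IsSim R ∧ R a b

theorem stmt14 {Var : Type} (C : (Var → ℕ) → Prop)
    (A B D : (Var → ℕ) → STy) (R1 R2 : STy → STy → Prop)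
    (hR1 : IsSim R1) (hR2 : IsSim R2)
    (h1 : ∀ σ, C σ → R1 (A σ) (B σ))
    (h2 : ∀ σ, C σ → R2 (B σ) (D σ)) :
    ∃ R : STy → STy → Prop, IsSim R ∧ ∀ σ, C σ → R (A σ) (D σ) := by
  refine ⟨fun a c => (∃ b, R1 a b ∧ R2 b c) ∨ (∃ b, R2 a b ∧ R1 b c), ?_,
    fun σ hσ => Or.inl ⟨B σ, h1 σ hσ, h2 σ hσ⟩⟩
  rintro a c (⟨b, hab, hbc⟩ | ⟨b, hab, hbc⟩)
  · have p1 := hR1 a b hab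
    have p2 := hR2 b c hbc
    clear hab hbc h1 h2
    cases a <;> cases b <;> simp only [Phi] at p1 <;>
      cases c <;> simp only [Phi] at p2 ⊢ <;>
      first
        | exact fun n => Or.inl ⟨_, p1 n, p2 n⟩
        | exact ⟨p2.1.trans p1.1, fun x hx => Or.inl ⟨_, p1.2 x (p2.1 hx), p2.2 x hx⟩⟩
        | exact ⟨p1.1.trans p2.1, fun x hx => Or.inl ⟨_, p1.2 x hx, p2.2 x (p1.1 hx)⟩⟩
        | exact ⟨fun h => p2.1 (p1.1 h), Or.inl ⟨_, p1.2, p2.2⟩⟩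
        | exact ⟨fun h => p1.1 (p2.1 h), Or.inl ⟨_, p1.2, p2.2⟩⟩
        | exact ⟨Or.inr ⟨_, p2.1, p1.1⟩, Or.inl ⟨_, p1.2, p2.2⟩⟩
        | exact ⟨Or.inl ⟨_, p1.1, p2.1⟩, Or.inl ⟨_, p1.2, p2.2⟩⟩
  · have p1 := hR2 a b hab
    have p2 := hR1 b c hbc
    clear hab hbc h1 h2
    cases a <;> cases b <;> simp only [Phi] at p1 <;>
      cases c <;> simp only [Phi] at p2 ⊢ <;>
      first
        | exact fun n => Or.inr ⟨_, p1 n, p2 n⟩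
        | exact ⟨p2.1.trans p1.1, fun x hx => Or.inr ⟨_, p1.2 x (p2.1 hx), p2.2 x hx⟩⟩
        | exact ⟨p1.1.trans p2.1, fun x hx => Or.inr ⟨_, p1.2 x hx, p2.2 x (p1.1 hx)⟩⟩
        | exact ⟨fun h => p2.1 (p1.1 h), Or.inr ⟨_, p1.2, p2.2⟩⟩
        | exact ⟨fun h => p1.1 (p2.1 h), Or.inr ⟨_, p1.2, p2.2⟩⟩
        | exact ⟨Or.inl ⟨_, p2.1, p1.1⟩, Or.inr ⟨_, p1.2, p2.2⟩⟩
        | exact ⟨Or.inr ⟨_, p1.1, p2.1⟩, Or.inr ⟨_, p1.2, p2.2⟩⟩
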